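/- div maps V(T) onto P_1 ⊕ span{b_T^NC}: for every v ∈ V(T) there exist a polynomial p of total degree ≤ 1 and c ∈ ℝ with div v = p + c·b_T^NC; conversely, for every polynomial p of total degree ≤ 1 and every c ∈ ℝ there exists v ∈ V(T) with div v = p + c·b_T^NC. -/

import Mathlib

open Matrix Finset
open scoped RealInnerProductSpace

noncomputable section

/-- Evaluation of a multivariate polynomial at a point of `ℝ^d`. -/
noncomputable def pval {d : ℕ} (p : MvPolynomial (Fin d) ℝ) (x : EuclideanSpace ℝ (Fin d)) : ℝ :=
  MvPolynomial.eval (fun i => x i) p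

/-- Divergence of a vector field on `ℝ^d`: the sum of the diagonal entries of its Jacobian. -/
noncomputable def divg {d : ℕ} (w : EuclideanSpace ℝ (Fin d) → EuclideanSpace ℝ (Fin d))
    (x : EuclideanSpace ℝ (Fin d)) : ℝ :=
  ∑ i, fderiv ℝ w x (EuclideanSpace.single i 1) i

/-- The nonconforming bubble function `b_T^NC = 2 - (d+1) ∑ᵢ λᵢ²`. -/
noncomputable def bNC {d : ℕ} (L : Fin (d + 1) → (EuclideanSpace ℝ (Fin d) →ᵃ[ℝ] ℝ))
    (x : EuclideanSpace ℝ (Fin d)) : ℝ :=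
  2 - ((d : ℝ) + 1) * ∑ i, (L i x) ^ 2

/-- The element bubble `b_T = λ₀ λ₁ ⋯ λ_d`. -/
noncomputable def bT {d : ℕ} (L : Fin (d + 1) → (EuclideanSpace ℝ (Fin d) →ᵃ[ℝ] ℝ))
    (x : EuclideanSpace ℝ (Fin d)) : ℝ :=
  ∏ i, L i x

/-- The facet bubble `b_{F_i} = ∏_{j ≠ i} λⱼ`. -/
noncomputable def bF {d : ℕ} (L : Fin (d + 1) → (EuclideanSpace ℝ (Fin d) →ᵃ[ℝ] ℝ))
    (i : Fin (d + 1)) (x : EuclideanSpace ℝ (Fin d)) : ℝ :=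
  ∏ j ∈ Finset.univ.erase i, L j x

/-- The outward unit normal `nᵢ = -∇λᵢ/|∇λᵢ|` of the facet `F_i`, in terms of the gradient
vectors `g i` of the barycentric coordinates. -/
noncomputable def nrm {d : ℕ} (g : Fin (d + 1) → EuclideanSpace ℝ (Fin d)) (i : Fin (d + 1)) :
    EuclideanSpace ℝ (Fin d) :=
  -(‖g i‖⁻¹ • g i)

/-- The special field `w_T(x) = (1/(d+2))(b_T^NC(x) - 2λ₀(x) + 2/d) ∑_{i=1}^d λᵢ(x)(vᵢ - v₀)`. -/
noncomputable def wT {d : ℕ} (v : Fin (d + 1) → EuclideanSpace ℝ (Fin d))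
    (L : Fin (d + 1) → (EuclideanSpace ℝ (Fin d) →ᵃ[ℝ] ℝ)) :
    EuclideanSpace ℝ (Fin d) → EuclideanSpace ℝ (Fin d) := fun x =>
  ((1 : ℝ) / ((d : ℝ) + 2)) • ((bNC L x - 2 * L 0 x + 2 / (d : ℝ)) •
    ∑ i ∈ Finset.univ.erase (0 : Fin (d + 1)), L i x • (v i - v 0))

/-- Application of the matrix `skw(a ⊗ b) = (a bᵀ - b aᵀ)/2` to the vector `z`. -/
noncomputable def skwApply {d : ℕ} (a b z : EuclideanSpace ℝ (Fin d)) :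
    EuclideanSpace ℝ (Fin d) :=
  ((1 : ℝ) / 2) • (⟪b, z⟫ • a - ⟪a, z⟫ • b)

/-- The generating set of the shape function space `V(T)`:
(i) all vector fields with polynomial components of total degree ≤ 2; (ii) `w_T`;
(iii) the fields `skw(nᵢ ⊗ t) ∇(b_T b_{F_i} ℓ)` with `t ⟂ nᵢ` and `ℓ ∈ span{λⱼ : j ≠ i}`;
(iv) the fields `skw(nᵢ ⊗ t) ∇(b_T² b_{F_i})` with `t ⟂ nᵢ`. -/
noncomputable def VTset {d : ℕ} (v : Fin (d + 1) → EuclideanSpace ℝ (Fin d))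
    (L : Fin (d + 1) → (EuclideanSpace ℝ (Fin d) →ᵃ[ℝ] ℝ))
    (g : Fin (d + 1) → EuclideanSpace ℝ (Fin d)) :
    Set (EuclideanSpace ℝ (Fin d) → EuclideanSpace ℝ (Fin d)) :=
  {w | ∃ P : Fin d → MvPolynomial (Fin d) ℝ,
      (∀ k, (P k).totalDegree ≤ 2) ∧ ∀ x k, w x k = pval (P k) x}
  ∪ {wT v L}
  ∪ {w | ∃ i : Fin (d + 1), ∃ t : EuclideanSpace ℝ (Fin d), ⟪t, nrm g i⟫ = 0 ∧
      ∃ c : Fin (d + 1) → ℝ, c i = 0 ∧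
      ∀ x, w x = skwApply (nrm g i) t
        (gradient (fun y => bT L y * bF L i y * ∑ j, c j * L j y) x)}
  ∪ {w | ∃ i : Fin (d + 1), ∃ t : EuclideanSpace ℝ (Fin d), ⟪t, nrm g i⟫ = 0 ∧
      ∀ x, w x = skwApply (nrm g i) t
        (gradient (fun y => (bT L y) ^ 2 * bF L i y) x)}

/-- The shape function space `V(T)`, the span of `VTset`. -/
noncomputable def VT {d : ℕ} (v : Fin (d + 1) → EuclideanSpace ℝ (Fin d))
    (L : Fin (d + 1) → (EuclideanSpace ℝ (Fin d) →ᵃ[ℝ] ℝ))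
    (g : Fin (d + 1) → EuclideanSpace ℝ (Fin d)) :
    Submodule ℝ (EuclideanSpace ℝ (Fin d) → EuclideanSpace ℝ (Fin d)) :=
  Submodule.span ℝ (VTset v L g)


section Helpers
variable {d : ℕ}

private lemma esum (c : EuclideanSpace ℝ (Fin d)) :
    ∑ i, c i • EuclideanSpace.single i (1:ℝ) = c := by
  ext k
  rw [WithLp.ofLp_sum, Finset.sum_apply]
  simp [EuclideanSpace.single_apply]

private lemma clm_eval (F : EuclideanSpace ℝ (Fin d) →L[ℝ] ℝ) (c : EuclideanSpace ℝ (Fin d)) :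
    F c = ∑ i, c i * F (EuclideanSpace.single i 1) := by
  conv_lhs => rw [← esum c]
  rw [map_sum]
  simp

private lemma divg_eq {w : EuclideanSpace ℝ (Fin d) → EuclideanSpace ℝ (Fin d)}
    {D : EuclideanSpace ℝ (Fin d) →L[ℝ] EuclideanSpace ℝ (Fin d)} {x}
    (h : HasFDerivAt w D x) :
    divg w x = ∑ i, D (EuclideanSpace.single i 1) i := by
  simp only [divg, h.fderiv]

open MvPolynomial in
private lemma hasFDerivAt_pval (p : MvPolynomial (Fin d) ℝ) (x : EuclideanSpace ℝ (Fin d)) :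
    HasFDerivAt (fun y => pval p y)
      (∑ j, pval (pderiv j p) x • (EuclideanSpace.proj j :
        EuclideanSpace ℝ (Fin d) →L[ℝ] ℝ)) x := by
  induction p using MvPolynomial.induction_on with
  | C a =>
    have h1 : (fun y : EuclideanSpace ℝ (Fin d) => pval (C a) y) = fun _ => a :=
      funext fun y => by simp [pval]
    have h2 : (∑ j, pval (pderiv j (C a : MvPolynomial (Fin d) ℝ)) x •
        (EuclideanSpace.proj j : EuclideanSpace ℝ (Fin d) →L[ℝ] ℝ)) = 0 := by
      simp [pval]
    rw [h1, h2]
    exact hasFDerivAt_const a x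
  | add p q hp hq =>
    have h := hp.fun_add hq
    have h1 : (fun y : EuclideanSpace ℝ (Fin d) => pval p y + pval q y)
        = fun y => pval (p + q) y := funext fun y => by simp [pval]
    rw [h1] at h
    refine h.congr_fderiv (Eq.symm ?_)
    rw [← Finset.sum_add_distrib]
    refine Finset.sum_congr rfl fun j _ => ?_
    simp [pval, add_smul]
  | mul_X p n hp =>
    have hn : HasFDerivAt (fun y : EuclideanSpace ℝ (Fin d) => y n)
        (EuclideanSpace.proj n : EuclideanSpace ℝ (Fin d) →L[ℝ] ℝ) x :=
      by simpa using (EuclideanSpace.proj n :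
        EuclideanSpace ℝ (Fin d) →L[ℝ] ℝ).hasFDerivAt (x := x)
    have h := hp.fun_mul hn
    have h1 : (fun y : EuclideanSpace ℝ (Fin d) => pval p y * y n)
        = fun y => pval (p * X n) y := funext fun y => by simp [pval]
    rw [h1] at h
    refine h.congr_fderiv (Eq.symm ?_)
    ext z
    simp only [ContinuousLinearMap.sum_apply, ContinuousLinearMap.smul_apply,
      ContinuousLinearMap.add_apply, PiLp.proj_apply, smul_eq_mul, pval,
      pderiv_mul, pderiv_X, map_add, _root_.map_mul, eval_X, Pi.single_apply, apply_ite,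
      _root_.map_one, map_zero, mul_ite, mul_one, mul_zero, ite_mul, zero_mul, one_mul]
    have hsplit : ∀ j : Fin d,
        (if n = j then ((MvPolynomial.eval fun i => x i) ((pderiv j) p) * x n
            + (MvPolynomial.eval fun i => x i) p) * z j
        else ((MvPolynomial.eval fun i => x i) ((pderiv j) p) * x n + 0) * z j)
        = (MvPolynomial.eval fun i => x i) ((pderiv j) p) * x n * z j
          + (if n = j then (MvPolynomial.eval fun i => x i) p * z j else 0) := by
      intro j; split <;> ring
    simp only [hsplit]
    rw [Finset.sum_add_distrib, Finset.sum_ite_eq, if_pos (Finset.mem_univ n), add_comm]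
    congr 1
    rw [Finset.mul_sum]
    exact Finset.sum_congr rfl fun j _ => by ring

open MvPolynomial in
private lemma hasFDerivAt_polyField (P : Fin d → MvPolynomial (Fin d) ℝ)
    (x : EuclideanSpace ℝ (Fin d)) :
    HasFDerivAt (F := EuclideanSpace ℝ (Fin d)) (fun y => WithLp.toLp 2 (fun k => pval (P k) y))
      ((((PiLp.continuousLinearEquiv 2 ℝ (fun _ : Fin d => ℝ)).symm :
          (Fin d → ℝ) →L[ℝ] EuclideanSpace ℝ (Fin d))).comp
        (ContinuousLinearMap.pi fun k => ∑ j, pval (pderiv j (P k)) x •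
          (EuclideanSpace.proj j : EuclideanSpace ℝ (Fin d) →L[ℝ] ℝ))) x := by
  have h1 : HasFDerivAt (fun y : EuclideanSpace ℝ (Fin d) => (fun k => pval (P k) y : Fin d → ℝ))
      (ContinuousLinearMap.pi fun k => ∑ j, pval (pderiv j (P k)) x •
        (EuclideanSpace.proj j : EuclideanSpace ℝ (Fin d) →L[ℝ] ℝ)) x :=
    hasFDerivAt_pi.2 fun k => hasFDerivAt_pval (P k) x
  exact (((PiLp.continuousLinearEquiv 2 ℝ (fun _ : Fin d => ℝ)).symm :
      (Fin d → ℝ) →L[ℝ] EuclideanSpace ℝ (Fin d))).hasFDerivAt.comp x h1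

open MvPolynomial in
private lemma divg_polyField (P : Fin d → MvPolynomial (Fin d) ℝ) (x : EuclideanSpace ℝ (Fin d)) :
    divg (fun y => WithLp.toLp 2 (fun k => pval (P k) y)) x = ∑ i, pval (pderiv i (P i)) x := by
  rw [divg_eq (hasFDerivAt_polyField P x)]
  refine Finset.sum_congr rfl fun i _ => ?_
  simp [EuclideanSpace.single_apply, Finset.sum_ite_eq']

open MvPolynomial in
private lemma totalDegree_pderiv_le' (p : MvPolynomial (Fin d) ℝ) (j : Fin d) (n : ℕ)
    (h : p.totalDegree ≤ n + 1) : (pderiv j p).totalDegree ≤ n := by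
  classical
  conv_lhs => rw [p.as_sum]
  rw [map_sum]
  refine (totalDegree_finset_sum _ _).trans (Finset.sup_le fun s hs => ?_)
  rw [pderiv_monomial]
  by_cases h0 : s j = 0
  · simp [h0]
  · refine (totalDegree_monomial_le _ _).trans ?_
    have hsum : (s.sum fun _ e => e) ≤ n + 1 := le_trans (le_totalDegree hs) h
    rw [Finsupp.sum_fintype _ _ (fun _ => rfl)] at hsum ⊢
    have hj : 1 ≤ s j := Nat.one_le_iff_ne_zero.2 h0
    have h1 : ∑ i : Fin d, ((s - Finsupp.single j 1 : Fin d →₀ ℕ)) i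
        = (s j - 1) + ∑ i ∈ Finset.univ.erase j, s i := by
      rw [← Finset.add_sum_erase _ _ (Finset.mem_univ j)]
      congr 1
      · simp
      · refine Finset.sum_congr rfl fun i hi => ?_
        have : i ≠ j := (Finset.mem_erase.1 hi).1
        simp [Finsupp.single_apply, Ne.symm this]
    have h2 : ∑ i : Fin d, s i = s j + ∑ i ∈ Finset.univ.erase j, s i :=
      (Finset.add_sum_erase _ _ (Finset.mem_univ j)).symm
    rw [h2] at hsum
    simp only [id_eq]
    rw [h1]
    omega

open MvPolynomial in
private lemma eq_C_of_totalDegree_eq_zero' {p : MvPolynomial (Fin d) ℝ}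
    (h : p.totalDegree = 0) : p = C (coeff 0 p) := by
  ext m
  by_cases hm : m = 0
  · simp [hm]
  · rw [coeff_C, if_neg (Ne.symm hm)]
    by_contra hc
    have hs := (totalDegree_eq_zero_iff (Fin d) p).1 h m (mem_support_iff.2 hc)
    exact hm (Finsupp.ext hs)

private lemma sum_L_eq_one (v : Fin (d + 1) → EuclideanSpace ℝ (Fin d))
    (hv : AffineIndependent ℝ v)
    (L : Fin (d + 1) → (EuclideanSpace ℝ (Fin d) →ᵃ[ℝ] ℝ))
    (hL : ∀ i j, L i (v j) = if i = j then 1 else 0) (x : EuclideanSpace ℝ (Fin d)) :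
    ∑ i, L i x = 1 := by
  classical
  have htop : affineSpan ℝ (Set.range v) = ⊤ := by
    rw [hv.affineSpan_eq_top_iff_card_eq_finrank_add_one]
    simp [finrank_euclideanSpace_fin]
  let b : AffineBasis (Fin (d + 1)) ℝ (EuclideanSpace ℝ (Fin d)) := ⟨v, hv, htop⟩
  have hb : ∀ j, b j = v j := fun j => rfl
  have key : ∀ i, L i x = b.coord i x := by
    intro i
    conv_lhs => rw [← b.affineCombination_coord_eq_self x]
    rw [Finset.map_affineCombination _ _ _ (b.sum_coord_apply_eq_one x)]
    rw [Finset.univ.affineCombination_eq_linear_combination _ _ (b.sum_coord_apply_eq_one x)]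
    simp only [Function.comp, hb, hL, smul_eq_mul, mul_ite, mul_one, mul_zero]
    rw [Finset.sum_ite_eq Finset.univ i (fun j => b.coord j x)]
    simp
  rw [Finset.sum_congr rfl fun i _ => key i]
  exact b.sum_coord_apply_eq_one x

end Helpers

section WTlemmas
variable {d : ℕ} (v : Fin (d + 1) → EuclideanSpace ℝ (Fin d))
  (L : Fin (d + 1) → (EuclideanSpace ℝ (Fin d) →ᵃ[ℝ] ℝ))

/-- The (continuous) linear part of `L i`. -/
private noncomputable def lcl (i : Fin (d + 1)) : EuclideanSpace ℝ (Fin d) →L[ℝ] ℝ :=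
  LinearMap.toContinuousLinearMap (L i).linear

private lemma lcl_apply (i : Fin (d + 1)) (z : EuclideanSpace ℝ (Fin d)) :
    lcl L i z = (L i).linear z := rfl

private lemma hasFDerivAt_L (i : Fin (d + 1)) (x : EuclideanSpace ℝ (Fin d)) :
    HasFDerivAt (fun y => L i y) (lcl L i) x := by
  have h : (fun y => L i y) = fun y => (L i).linear y + L i 0 := by
    funext y
    rw [AffineMap.decomp (L i)]
    simp
  rw [h]
  simpa [lcl] using
    ((LinearMap.toContinuousLinearMap (L i).linear).hasFDerivAt (x := x)).add_const (L i 0)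

private noncomputable def UU : EuclideanSpace ℝ (Fin d) →L[ℝ] EuclideanSpace ℝ (Fin d) :=
  ∑ i ∈ Finset.univ.erase (0 : Fin (d + 1)), (lcl L i).smulRight (v i - v 0)

private noncomputable def SD (x : EuclideanSpace ℝ (Fin d)) :
    EuclideanSpace ℝ (Fin d) →L[ℝ] ℝ :=
  ∑ i, (2 * L i x) • lcl L i

private noncomputable def PhiD (x : EuclideanSpace ℝ (Fin d)) :
    EuclideanSpace ℝ (Fin d) →L[ℝ] ℝ :=
  0 - ((d : ℝ) + 1) • SD L x - (2 : ℝ) • lcl L 0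

private noncomputable def WD (x : EuclideanSpace ℝ (Fin d)) :
    EuclideanSpace ℝ (Fin d) →L[ℝ] EuclideanSpace ℝ (Fin d) :=
  ((1 : ℝ) / ((d : ℝ) + 2)) • ((bNC L x - 2 * L 0 x + 2 / (d : ℝ)) • UU v L +
    (PhiD L x).smulRight (∑ i ∈ Finset.univ.erase (0 : Fin (d + 1)), L i x • (v i - v 0)))

private lemma wT_hasFDerivAt (x : EuclideanSpace ℝ (Fin d)) :
    HasFDerivAt (wT v L) (WD v L x) x := by
  have hu : HasFDerivAt
      (fun y => ∑ i ∈ Finset.univ.erase (0 : Fin (d + 1)), L i y • (v i - v 0)) (UU v L) x :=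
    HasFDerivAt.fun_sum fun i _ => (hasFDerivAt_L L i x).smul_const (v i - v 0)
  have hS : HasFDerivAt (fun y => ∑ i, (L i y) ^ 2) (SD L x) x := by
    refine HasFDerivAt.fun_sum fun i _ => ?_
    have h := (hasFDerivAt_L L i x).fun_mul (hasFDerivAt_L L i x)
    have h1 : (fun y => L i y * L i y) = fun y => (L i y) ^ 2 := funext fun y => (sq (L i y)).symm
    rw [h1] at h
    refine h.congr_fderiv (Eq.symm ?_)
    ext z
    simp only [ContinuousLinearMap.smul_apply, ContinuousLinearMap.add_apply, smul_eq_mul]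
    ring
  have hφ : HasFDerivAt (fun y => bNC L y - 2 * L 0 y + 2 / (d : ℝ)) (PhiD L x) x := by
    have h2 : HasFDerivAt (fun y => (2 : ℝ) - ((d : ℝ) + 1) * ∑ i, (L i y) ^ 2)
        (0 - ((d : ℝ) + 1) • SD L x) x :=
      (hasFDerivAt_const (2 : ℝ) x).sub (hS.const_mul ((d : ℝ) + 1))
    have h3 := (h2.sub ((hasFDerivAt_L L 0 x).const_mul 2)).add_const (2 / (d : ℝ))
    simpa [bNC, PhiD] using h3
  have h4 := (hφ.smul hu).const_smul ((1 : ℝ) / ((d : ℝ) + 2))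
  exact h4

private lemma UU_trace (hL : ∀ i j, L i (v j) = if i = j then 1 else 0) :
    ∑ i, UU v L (EuclideanSpace.single i 1) i = (d : ℝ) := by
  have h1 : ∀ i : Fin d, UU v L (EuclideanSpace.single i 1) i
      = ∑ j ∈ Finset.univ.erase (0 : Fin (d + 1)),
          (v j - v 0) i * lcl L j (EuclideanSpace.single i 1) := by
    intro i
    simp only [UU, ContinuousLinearMap.sum_apply, ContinuousLinearMap.smulRight_apply]
    rw [WithLp.ofLp_sum, Finset.sum_apply]
    refine Finset.sum_congr rfl fun j _ => ?_
    simp [mul_comm]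
  calc ∑ i, UU v L (EuclideanSpace.single i 1) i
      = ∑ j ∈ Finset.univ.erase (0 : Fin (d + 1)), ∑ i : Fin d,
          (v j - v 0) i * lcl L j (EuclideanSpace.single i 1) := by
        rw [Finset.sum_congr rfl fun i _ => h1 i, Finset.sum_comm]
    _ = ∑ j ∈ Finset.univ.erase (0 : Fin (d + 1)), (1 : ℝ) := by
        refine Finset.sum_congr rfl fun j hj => ?_
        rw [← clm_eval (lcl L j) (v j - v 0), lcl_apply]
        have := AffineMap.linearMap_vsub (L j) (v j) (v 0)
        rw [vsub_eq_sub, vsub_eq_sub] at this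
        rw [this, hL j j, hL j 0, if_pos rfl, if_neg (Finset.mem_erase.1 hj).1]
        norm_num
    _ = (d : ℝ) := by
        rw [Finset.sum_const]
        simp

private lemma lcl_u (hL : ∀ i j, L i (v j) = if i = j then 1 else 0)
    (hsum : ∀ x, ∑ i, L i x = 1) (x : EuclideanSpace ℝ (Fin d)) (j : Fin (d + 1)) :
    lcl L j (∑ i ∈ Finset.univ.erase (0 : Fin (d + 1)), L i x • (v i - v 0))
      = L j x - (if j = 0 then 1 else 0) := by
  rw [lcl_apply, map_sum]
  have h1 : ∀ i ∈ Finset.univ.erase (0 : Fin (d + 1)),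
      (L j).linear (L i x • (v i - v 0))
        = L i x * ((if j = i then 1 else 0) - (if j = 0 then 1 else 0)) := by
    intro i _
    rw [_root_.map_smul]
    have := AffineMap.linearMap_vsub (L j) (v i) (v 0)
    rw [vsub_eq_sub, vsub_eq_sub] at this
    rw [this, hL j i, hL j 0]
    rfl
  rw [Finset.sum_congr rfl h1]
  by_cases hj : j = 0
  · subst hj
    have h2 : ∑ i ∈ Finset.univ.erase (0 : Fin (d + 1)),
        L i x * ((if (0:Fin (d+1)) = i then (1:ℝ) else 0) - (if (0:Fin (d+1)) = 0 then 1 else 0))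
        = - ∑ i ∈ Finset.univ.erase (0 : Fin (d + 1)), L i x := by
      rw [← Finset.sum_neg_distrib]
      refine Finset.sum_congr rfl fun i hi => ?_
      rw [if_neg (fun h => (Finset.mem_erase.1 hi).1 h.symm), if_pos rfl]
      ring
    rw [h2]
    have h3 := hsum x
    rw [← Finset.add_sum_erase _ _ (Finset.mem_univ (0 : Fin (d + 1)))] at h3
    rw [if_pos rfl]
    linarith
  · have h2 : ∑ i ∈ Finset.univ.erase (0 : Fin (d + 1)),
        L i x * ((if j = i then (1:ℝ) else 0) - (if j = 0 then 1 else 0))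
        = ∑ i ∈ Finset.univ.erase (0 : Fin (d + 1)), (if j = i then L i x else 0) := by
      refine Finset.sum_congr rfl fun i hi => ?_
      rw [if_neg hj]
      by_cases h : j = i <;> simp [h]
    rw [h2, Finset.sum_ite_eq _ j, if_pos (Finset.mem_erase.2 ⟨hj, Finset.mem_univ j⟩), if_neg hj]
    ring

private lemma wT_divg (hd : 1 ≤ d) (hL : ∀ i j, L i (v j) = if i = j then 1 else 0)
    (hsum : ∀ x, ∑ i, L i x = 1) (x : EuclideanSpace ℝ (Fin d)) :
    divg (wT v L) x = bNC L x := by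
  rw [divg_eq (wT_hasFDerivAt v L x)]
  set u := ∑ i ∈ Finset.univ.erase (0 : Fin (d + 1)), L i x • (v i - v 0) with hu
  have hcomp : ∀ i : Fin d, WD v L x (EuclideanSpace.single i 1) i
      = ((1 : ℝ) / ((d : ℝ) + 2)) * ((bNC L x - 2 * L 0 x + 2 / (d : ℝ))
          * UU v L (EuclideanSpace.single i 1) i
        + PhiD L x (EuclideanSpace.single i 1) * u i) := by
    intro i
    simp only [WD, ContinuousLinearMap.smul_apply, ContinuousLinearMap.add_apply,
      ContinuousLinearMap.smulRight_apply, ← hu]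
    simp [mul_add]
  rw [Finset.sum_congr rfl fun i _ => hcomp i]
  rw [← Finset.mul_sum]
  have hsplit : ∑ i : Fin d, ((bNC L x - 2 * L 0 x + 2 / (d : ℝ))
        * UU v L (EuclideanSpace.single i 1) i
      + PhiD L x (EuclideanSpace.single i 1) * u i)
      = (bNC L x - 2 * L 0 x + 2 / (d : ℝ)) * (d : ℝ) + PhiD L x u := by
    rw [Finset.sum_add_distrib, ← Finset.mul_sum, UU_trace v L hL]
    congr 1
    rw [clm_eval (PhiD L x) u]
    refine Finset.sum_congr rfl fun i _ => (mul_comm _ _)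
  rw [hsplit]
  have hPhi : PhiD L x u = -(((d:ℝ)+1)) * (2 * ∑ j, (L j x)^2 - 2 * L 0 x) - 2 * (L 0 x - 1) := by
    have hSDu : SD L x u = 2 * ∑ j, (L j x)^2 - 2 * L 0 x := by
      simp only [SD, ContinuousLinearMap.sum_apply, ContinuousLinearMap.smul_apply, smul_eq_mul]
      have : ∀ j, (2 * L j x) * lcl L j u = 2 * (L j x)^2 - (if j = 0 then 2 * L j x else 0) := by
        intro j
        rw [lcl_u v L hL hsum x j]
        by_cases h : j = 0 <;> simp [h] <;> ring
      rw [Finset.sum_congr rfl fun j _ => this j, Finset.sum_sub_distrib, ← Finset.mul_sum]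
      rw [Finset.sum_ite_eq' _ (0 : Fin (d+1)), if_pos (Finset.mem_univ _)]
      try ring
    simp only [PhiD, ContinuousLinearMap.sub_apply, ContinuousLinearMap.smul_apply,
      ContinuousLinearMap.zero_apply, smul_eq_mul, hSDu]
    rw [lcl_u v L hL hsum x 0, if_pos rfl]
    ring
  rw [hPhi]
  have hA : ((d:ℝ)+1) * ∑ j, (L j x)^2 = 2 - bNC L x := by
    simp only [bNC]; ring
  have hd0 : (d : ℝ) ≠ 0 := Nat.cast_ne_zero.2 (by omega)
  have hd2 : (d : ℝ) + 2 ≠ 0 := by positivity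
  field_simp
  nlinarith [hA]

end WTlemmas

section SkwLemmas
variable {d : ℕ}

private lemma contDiff_affine (f : EuclideanSpace ℝ (Fin d) →ᵃ[ℝ] ℝ) :
    ContDiff ℝ ⊤ fun y => f y := by
  have h : (fun y => f y) = fun y => f.linear y + f 0 := by
    funext y
    rw [AffineMap.decomp f]
    simp
  rw [h]
  exact ((f.linear.toContinuousLinearMap).contDiff).add contDiff_const

private lemma contDiff_finprod {ι : Type*} (s : Finset ι)
    (f : ι → EuclideanSpace ℝ (Fin d) → ℝ) (h : ∀ i, ContDiff ℝ ⊤ (f i)) :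
    ContDiff ℝ ⊤ fun y => ∏ i ∈ s, f i y := by
  classical
  induction s using Finset.induction with
  | empty => simpa using contDiff_const
  | insert _ _ hnot ih =>
    simp only [Finset.prod_insert hnot]
    exact (h _).mul ih

private lemma contDiff_finsum {ι : Type*} (s : Finset ι)
    (f : ι → EuclideanSpace ℝ (Fin d) → ℝ) (h : ∀ i, ContDiff ℝ ⊤ (f i)) :
    ContDiff ℝ ⊤ fun y => ∑ i ∈ s, f i y := by
  classical
  induction s using Finset.induction with
  | empty => simpa using contDiff_const
  | insert _ _ hnot ih =>
    simp only [Finset.sum_insert hnot]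
    exact (h _).add ih

private lemma skw_div (a t : EuclideanSpace ℝ (Fin d)) (ψ : EuclideanSpace ℝ (Fin d) → ℝ)
    (hψ : ContDiff ℝ ⊤ ψ) :
    Differentiable ℝ (fun x => skwApply a t (gradient ψ x)) ∧
    ∀ x, divg (fun x => skwApply a t (gradient ψ x)) x = 0 := by
  classical
  set B : EuclideanSpace ℝ (Fin d) →L[ℝ] EuclideanSpace ℝ (Fin d) :=
    ((1 : ℝ) / 2) • (((innerSL ℝ t).smulRight a) - ((innerSL ℝ a).smulRight t)) with hB
  have hBz : ∀ z, B z = skwApply a t z := by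
    intro z
    simp [hB, skwApply, smul_sub, PiLp.inner_apply, RCLike.inner_apply, conj_trivial]
  set A : StrongDual ℝ (EuclideanSpace ℝ (Fin d)) →L[ℝ] EuclideanSpace ℝ (Fin d) :=
    ((InnerProductSpace.toDual ℝ (EuclideanSpace ℝ (Fin d))).symm.toLinearIsometry).toContinuousLinearMap with hA
  have hAz : ∀ φ, A φ = (InnerProductSpace.toDual ℝ (EuclideanSpace ℝ (Fin d))).symm φ :=
    fun φ => rfl
  set f' : EuclideanSpace ℝ (Fin d) → (EuclideanSpace ℝ (Fin d) →L[ℝ] ℝ) := fderiv ℝ ψ with hf'def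
  have hf' : ∀ y, HasFDerivAt ψ (f' y) y := fun y =>
    (hψ.differentiable (by simp) y).hasFDerivAt
  have hC1 : ContDiff ℝ 1 f' := hψ.fderiv_right le_top
  have hH : ∀ x, HasFDerivAt f' (fderiv ℝ f' x) x := fun x =>
    (hC1.differentiable (by simp) x).hasFDerivAt
  have hsymm : ∀ x z y, fderiv ℝ f' x z y = fderiv ℝ f' x y z := fun x =>
    second_derivative_symmetric hf' (hH x)
  have hwfun : (fun x => skwApply a t (gradient ψ x)) = fun x => (B.comp A) (f' x) := by
    funext x
    rw [ContinuousLinearMap.comp_apply, hAz, hBz]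
    rfl
  have hw : ∀ x, HasFDerivAt (fun x => skwApply a t (gradient ψ x))
      ((B.comp A).comp (fderiv ℝ f' x)) x := by
    intro x
    rw [hwfun]
    exact (B.comp A).hasFDerivAt.comp x (hH x)
  refine ⟨fun x => (hw x).differentiableAt, fun x => ?_⟩
  rw [divg_eq (hw x)]
  set M : EuclideanSpace ℝ (Fin d) →L[ℝ] EuclideanSpace ℝ (Fin d) :=
    A.comp (fderiv ℝ f' x) with hM
  have hMcomp : ∀ i : Fin d, ((B.comp A).comp (fderiv ℝ f' x)) (EuclideanSpace.single i 1) i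
      = ((1:ℝ)/2) * (⟪t, M (EuclideanSpace.single i 1)⟫ * a i
        - ⟪a, M (EuclideanSpace.single i 1)⟫ * t i) := by
    intro i
    have : ((B.comp A).comp (fderiv ℝ f' x)) (EuclideanSpace.single i 1)
        = B (M (EuclideanSpace.single i 1)) := rfl
    rw [this, hBz]
    simp [skwApply, mul_comm]
  rw [Finset.sum_congr rfl fun i _ => hMcomp i, ← Finset.mul_sum]
  have hinner : ∀ (y z : EuclideanSpace ℝ (Fin d)), ⟪y, M z⟫ = fderiv ℝ f' x z y := by
    intro y z
    have : M z
        = (InnerProductSpace.toDual ℝ (EuclideanSpace ℝ (Fin d))).symm (fderiv ℝ f' x z) := rfl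
    rw [this, real_inner_comm, InnerProductSpace.toDual_symm_apply]
  have h1 : ∑ i : Fin d, (⟪t, M (EuclideanSpace.single i 1)⟫ * a i
      - ⟪a, M (EuclideanSpace.single i 1)⟫ * t i)
      = ⟪t, M a⟫ - ⟪a, M t⟫ := by
    rw [Finset.sum_sub_distrib]
    congr 1
    · have e1 : (⟪t, M a⟫ : ℝ) = ((innerSL ℝ t).comp M) a := rfl
      rw [e1, clm_eval]
      refine Finset.sum_congr rfl fun i _ => ?_
      simp [mul_comm]
    · have e1 : (⟪a, M t⟫ : ℝ) = ((innerSL ℝ a).comp M) t := rfl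
      rw [e1, clm_eval]
      refine Finset.sum_congr rfl fun i _ => ?_
      simp [mul_comm]
  rw [h1, hinner t a, hinner a t, hsymm x a t]
  ring

end SkwLemmas

section DivLin
variable {d : ℕ}

private lemma divg_add {w₁ w₂ : EuclideanSpace ℝ (Fin d) → EuclideanSpace ℝ (Fin d)}
    (h₁ : Differentiable ℝ w₁) (h₂ : Differentiable ℝ w₂) (x) :
    divg (w₁ + w₂) x = divg w₁ x + divg w₂ x := by
  have h : fderiv ℝ (w₁ + w₂) x = fderiv ℝ w₁ x + fderiv ℝ w₂ x := by
    have := fderiv_add (𝕜 := ℝ) (h₁ x) (h₂ x)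
    exact this
  rw [divg, divg, divg, ← Finset.sum_add_distrib]
  refine Finset.sum_congr rfl fun i _ => ?_
  rw [h]
  rfl

private lemma divg_smul (a : ℝ) {w : EuclideanSpace ℝ (Fin d) → EuclideanSpace ℝ (Fin d)}
    (h : Differentiable ℝ w) (x) :
    divg (a • w) x = a * divg w x := by
  have hf : fderiv ℝ (a • w) x = a • fderiv ℝ w x := by
    have := fderiv_const_smul (𝕜 := ℝ) (h x) a
    exact this
  rw [divg, divg, Finset.mul_sum]
  refine Finset.sum_congr rfl fun i _ => ?_
  rw [hf]
  rfl

private lemma divg_zero (x : EuclideanSpace ℝ (Fin d)) :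
    divg (0 : EuclideanSpace ℝ (Fin d) → EuclideanSpace ℝ (Fin d)) x = 0 := by
  have h : fderiv ℝ (0 : EuclideanSpace ℝ (Fin d) → EuclideanSpace ℝ (Fin d)) x = 0 := by
    have : (0 : EuclideanSpace ℝ (Fin d) → EuclideanSpace ℝ (Fin d))
        = fun _ => (0 : EuclideanSpace ℝ (Fin d)) := rfl
    rw [this, fderiv_fun_const]
    rfl
  simp [divg, h]

end DivLin

/-- `div` maps `V(T)` onto `P₁ ⊕ span{b_T^NC}`. -/
theorem stmt8 (d : ℕ) (hd : 2 ≤ d)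
    (v : Fin (d + 1) → EuclideanSpace ℝ (Fin d))
    (hv : AffineIndependent ℝ v)
    (L : Fin (d + 1) → (EuclideanSpace ℝ (Fin d) →ᵃ[ℝ] ℝ))
    (hL : ∀ i j, L i (v j) = if i = j then 1 else 0)
    (g : Fin (d + 1) → EuclideanSpace ℝ (Fin d))
    (hg : ∀ i x, ⟪g i, x⟫ = (L i).linear x) :
    (∀ w ∈ VT v L g, ∃ p : MvPolynomial (Fin d) ℝ, p.totalDegree ≤ 1 ∧ ∃ c : ℝ,
        ∀ x, divg w x = pval p x + c * bNC L x) ∧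
    (∀ p : MvPolynomial (Fin d) ℝ, p.totalDegree ≤ 1 → ∀ c : ℝ,
        ∃ w ∈ VT v L g, ∀ x, divg w x = pval p x + c * bNC L x) := by
  classical
  have hd1 : 1 ≤ d := by omega
  have hsum : ∀ x, ∑ i, L i x = 1 := sum_L_eq_one v hv L hL
  have hwT_diff : Differentiable ℝ (wT v L) := fun x => (wT_hasFDerivAt v L x).differentiableAt
  have hwT_div : ∀ x, divg (wT v L) x = bNC L x := wT_divg v L hd1 hL hsum
  constructor
  · intro w hw
    have hw' : w ∈ Submodule.span ℝ (VTset v L g) := hw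
    clear hw
    have main : Differentiable ℝ w ∧ ∃ p : MvPolynomial (Fin d) ℝ, p.totalDegree ≤ 1 ∧
        ∃ c : ℝ, ∀ x, divg w x = pval p x + c * bNC L x := by
      induction hw' using Submodule.span_induction with
      | mem w hmem =>
        rcases hmem with ((hmem | hmem) | hmem) | hmem
        · obtain ⟨P, hdeg, hP⟩ := hmem
          have hwfun : w = fun y => WithLp.toLp 2 (fun k => pval (P k) y) :=
            funext fun y => WithLp.ofLp_injective 2 (funext fun k => hP y k)
          refine ⟨?_, ∑ i, MvPolynomial.pderiv i (P i), ?_, 0, ?_⟩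
          · rw [hwfun]
            exact fun x => (hasFDerivAt_polyField P x).differentiableAt
          · exact (MvPolynomial.totalDegree_finset_sum _ _).trans
              (Finset.sup_le fun i _ => totalDegree_pderiv_le' (P i) i 1 (hdeg i))
          · intro x
            rw [hwfun, divg_polyField]
            simp [pval]
        · have hweq : w = wT v L := hmem
          refine ⟨hweq ▸ hwT_diff, 0, by simp, 1, fun x => ?_⟩
          rw [hweq, hwT_div]
          simp [pval]
        · obtain ⟨i, t, ht, c, hc0, hweq⟩ := hmem
          have hψ : ContDiff ℝ ⊤ (fun y => bT L y * bF L i y * ∑ j, c j * L j y) := by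
            simp only [bT, bF]
            exact ((contDiff_finprod _ _ fun j => contDiff_affine (L j)).mul
              (contDiff_finprod _ _ fun j => contDiff_affine (L j))).mul
              (contDiff_finsum _ _ fun j => contDiff_const.mul (contDiff_affine (L j)))
          have hwfun : w = fun x => skwApply (nrm g i) t
              (gradient (fun y => bT L y * bF L i y * ∑ j, c j * L j y) x) :=
            funext fun x => hweq x
          obtain ⟨hdiff, hdiv⟩ := skw_div (nrm g i) t _ hψ
          exact ⟨hwfun ▸ hdiff, 0, by simp, 0, fun x => by
            rw [hwfun, hdiv x]; simp [pval]⟩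
        · obtain ⟨i, t, ht, hweq⟩ := hmem
          have hψ : ContDiff ℝ ⊤ (fun y => (bT L y) ^ 2 * bF L i y) := by
            simp only [bT, bF]
            exact ((contDiff_finprod _ _ fun j => contDiff_affine (L j)).pow 2).mul
              (contDiff_finprod _ _ fun j => contDiff_affine (L j))
          have hwfun : w = fun x => skwApply (nrm g i) t
              (gradient (fun y => (bT L y) ^ 2 * bF L i y) x) :=
            funext fun x => hweq x
          obtain ⟨hdiff, hdiv⟩ := skw_div (nrm g i) t _ hψ
          exact ⟨hwfun ▸ hdiff, 0, by simp, 0, fun x => by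
            rw [hwfun, hdiv x]; simp [pval]⟩
      | zero =>
        refine ⟨?_, 0, by simp, 0, fun x => ?_⟩
        · exact differentiable_const (0 : EuclideanSpace ℝ (Fin d))
        · rw [divg_zero]
          simp [pval]
      | add w₁ w₂ h₁ h₂ ih₁ ih₂ =>
        obtain ⟨hdf₁, p₁, hp₁, c₁, he₁⟩ := ih₁
        obtain ⟨hdf₂, p₂, hp₂, c₂, he₂⟩ := ih₂
        refine ⟨hdf₁.add hdf₂, p₁ + p₂,
          (MvPolynomial.totalDegree_add _ _).trans (max_le hp₁ hp₂), c₁ + c₂, fun x => ?_⟩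
        rw [divg_add hdf₁ hdf₂, he₁, he₂]
        simp only [pval, map_add]
        ring
      | smul a w₀ h₀ ih =>
        obtain ⟨hdf, p₀, hp₀, c₀, he⟩ := ih
        have hdfs : Differentiable ℝ (a • w₀) := by
          exact fun y => (hdf y).const_smul a
        refine ⟨hdfs, MvPolynomial.C a * p₀, ?_, a * c₀, fun x => ?_⟩
        · refine (MvPolynomial.totalDegree_mul _ _).trans ?_
          simpa [MvPolynomial.totalDegree_C] using hp₀
        · rw [divg_smul a hdf, he]
          simp only [pval, _root_.map_mul, MvPolynomial.eval_C]
          ring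
    exact main.2
  · intro p hp c
    haveI : NeZero d := ⟨by omega⟩
    set e : ℝ := MvPolynomial.coeff 0 (MvPolynomial.pderiv (0 : Fin d) p) with he
    have hdC : MvPolynomial.pderiv (0 : Fin d) p = MvPolynomial.C e :=
      eq_C_of_totalDegree_eq_zero' (Nat.le_zero.mp (totalDegree_pderiv_le' p 0 0 hp))
    set Q : MvPolynomial (Fin d) ℝ :=
      MvPolynomial.X 0 * p - MvPolynomial.C (e / 2) * (MvPolynomial.X 0 * MvPolynomial.X 0)
      with hQ
    have hQd : MvPolynomial.pderiv (0 : Fin d) Q = p := by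
      have hC2 : (MvPolynomial.C (e / 2) : MvPolynomial (Fin d) ℝ)
          + MvPolynomial.C (e / 2) = MvPolynomial.C e := by
        rw [← map_add]
        norm_num
      rw [hQ, map_sub, MvPolynomial.pderiv_mul, MvPolynomial.pderiv_mul,
        MvPolynomial.pderiv_mul, MvPolynomial.pderiv_X_self, MvPolynomial.pderiv_C, hdC]
      rw [← hC2]
      ring
    have hQdeg : Q.totalDegree ≤ 2 := by
      rw [hQ, sub_eq_add_neg]
      refine (MvPolynomial.totalDegree_add _ _).trans (max_le ?_ ?_)
      · refine (MvPolynomial.totalDegree_mul _ _).trans ?_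
        have := MvPolynomial.totalDegree_X (R := ℝ) (0 : Fin d)
        omega
      · rw [MvPolynomial.totalDegree_neg]
        refine (MvPolynomial.totalDegree_mul _ _).trans ?_
        have h1 := MvPolynomial.totalDegree_X (R := ℝ) (0 : Fin d)
        have h2 := MvPolynomial.totalDegree_C (σ := Fin d) (e / 2)
        have h3 : (MvPolynomial.X (0 : Fin d) * MvPolynomial.X 0 :
            MvPolynomial (Fin d) ℝ).totalDegree ≤ 2 := by
          refine (MvPolynomial.totalDegree_mul _ _).trans ?_
          omega
        omega
    set P : Fin d → MvPolynomial (Fin d) ℝ := fun k => if k = 0 then Q else 0 with hP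
    set wpoly : EuclideanSpace ℝ (Fin d) → EuclideanSpace ℝ (Fin d) :=
      fun y => WithLp.toLp 2 (fun k => pval (P k) y) with hwpoly
    have hmem1 : wpoly ∈ VT v L g := by
      refine Submodule.subset_span (Or.inl (Or.inl (Or.inl ⟨P, fun k => ?_, fun x k => rfl⟩)))
      by_cases h : k = 0 <;> simp [hP, h, hQdeg]
    have hmem2 : wT v L ∈ VT v L g :=
      Submodule.subset_span (Or.inl (Or.inl (Or.inr rfl)))
    refine ⟨wpoly + c • wT v L,
      Submodule.add_mem _ hmem1 (Submodule.smul_mem _ c hmem2), fun x => ?_⟩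
    have hdiffp : Differentiable ℝ wpoly :=
      fun x => (hasFDerivAt_polyField P x).differentiableAt
    have hdiffs : Differentiable ℝ (c • wT v L) := by
      exact fun y => (hwT_diff y).const_smul c
    have hdp : divg wpoly x = pval p x := by
      rw [hwpoly, divg_polyField]
      rw [Finset.sum_eq_single (0 : Fin d)]
      · have hP0 : P (0 : Fin d) = Q := by simp [hP]
        rw [hP0, hQd]
      · intro b _ hb
        simp [hP, hb, pval]
      · simp
    rw [divg_add hdiffp hdiffs, hdp, divg_smul c hwT_diff, hwT_div]
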